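/- Let n ≥ 3 and k ≥ 1. A finite simple graph with n vertices admitting a deque layout with k deques has at most (2k+1)n − 5k − 1 edges. -/

import Mathlib

namespace DequePaper

/-- The four possible types of an edge in a deque: head-head, tail-tail,
head-tail and tail-head. -/
inductive EdgeType : Type
  | hh | tt | ht | th
  deriving DecidableEq

variable {V : Type} [LinearOrder V]

/-- Edges `(u,v)` and `(u',v')` (with `u ≺ v`, `u' ≺ v'`) cross:
`u ≺ u' ≺ v ≺ v'`. -/
def Cross (e e' : V × V) : Prop :=
  e.1 < e'.1 ∧ e'.1 < e.2 ∧ e.2 < e'.2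

/-- Edges `(u,v)` and `(u',v')` nest: `u ≺ u' ≺ v' ≺ v`. -/
def Nest (e e' : V × V) : Prop :=
  e.1 < e'.1 ∧ e'.1 < e'.2 ∧ e'.2 < e.2

/-- A set of edges is a stack iff no two of its edges cross. -/
def IsStack (E : Set (V × V)) : Prop :=
  ∀ e ∈ E, ∀ e' ∈ E, ¬ Cross e e'

/-- A set of edges is a queue iff no two of its edges nest. -/
def IsQueue (E : Set (V × V)) : Prop :=
  ∀ e ∈ E, ∀ e' ∈ E, ¬ Nest e e'

/-- A set of edges is a rique iff it contains no three edges
`(a,a')`, `(b,b')`, `(c,c')` with `a ≺ b ≺ c ≺ b'`, `b' ≺ a'` and `b' ≺ c'`. -/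
def IsRique (E : Set (V × V)) : Prop :=
  ¬ ∃ a a' b b' c c' : V, (a, a') ∈ E ∧ (b, b') ∈ E ∧ (c, c') ∈ E ∧
      a < b ∧ b < c ∧ c < b' ∧ b' < a' ∧ b' < c'

/-- The extension of the vertex order: all vertices, followed by the
wrap points (modelled by natural numbers), each wrap point lying strictly
after every vertex. -/
abbrev Ext (V : Type) := V ⊕ₗ ℕ

/-- A vertex, viewed in the extended order. -/
def vtx (v : V) : Ext V := toLex (Sum.inl v)

/-- A wrap point, viewed in the extended order. -/
def wpt (m : ℕ) : Ext V := toLex (Sum.inr m)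

/-- The interval of an edge in the upper family: `[u,v]` for an hh edge,
`[u,p(e)]` for an ht edge, `[v,p(e)]` for a th edge, nothing for a tt edge. -/
def upperIv (typ : V × V → EdgeType) (wrap : V × V → ℕ) (e : V × V) :
    Option (Ext V × Ext V) :=
  match typ e with
  | EdgeType.hh => some (vtx e.1, vtx e.2)
  | EdgeType.ht => some (vtx e.1, wpt (wrap e))
  | EdgeType.th => some (vtx e.2, wpt (wrap e))
  | EdgeType.tt => none

/-- The interval of an edge in the lower family: `[u,v]` for a tt edge,
`[v,p(e)]` for an ht edge, `[u,p(e)]` for a th edge, nothing for an hh edge. -/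
def lowerIv (typ : V × V → EdgeType) (wrap : V × V → ℕ) (e : V × V) :
    Option (Ext V × Ext V) :=
  match typ e with
  | EdgeType.tt => some (vtx e.1, vtx e.2)
  | EdgeType.ht => some (vtx e.2, wpt (wrap e))
  | EdgeType.th => some (vtx e.1, wpt (wrap e))
  | EdgeType.hh => none

/-- Two intervals `[x,y]` and `[x',y']` of the extended order cross:
`x ≺ x' ≺ y ≺ y'`. -/
def IvCross (i i' : Ext V × Ext V) : Prop :=
  i.1 < i'.1 ∧ i'.1 < i.2 ∧ i.2 < i'.2

/-- A family of intervals (one for each edge of `E` on which `iv` is defined)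
is pairwise non-crossing. -/
def FamilyNonCrossing (E : Set (V × V)) (iv : V × V → Option (Ext V × Ext V)) : Prop :=
  ∀ e ∈ E, ∀ e' ∈ E, ∀ i ∈ iv e, ∀ i' ∈ iv e', ¬ IvCross i i'

/-- `typ` and `wrap` form a witnessing type assignment for the edge set `E`
being a deque: wrap points are assigned injectively to the ht/th edges, and
both the upper and the lower families of intervals are pairwise non-crossing. -/
def IsDequeWitness (E : Set (V × V)) (typ : V × V → EdgeType) (wrap : V × V → ℕ) : Prop :=
  (∀ e ∈ E, ∀ e' ∈ E, (typ e = EdgeType.ht ∨ typ e = EdgeType.th) →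
      (typ e' = EdgeType.ht ∨ typ e' = EdgeType.th) → wrap e = wrap e' → e = e') ∧
  FamilyNonCrossing E (upperIv typ wrap) ∧
  FamilyNonCrossing E (lowerIv typ wrap)

/-- A set of edges is a deque iff it admits a witnessing type assignment. -/
def IsDeque (E : Set (V × V)) : Prop :=
  ∃ typ wrap, IsDequeWitness E typ wrap

/-- The edges of a graph `G`, written as ordered pairs with respect to the
vertex order given by the order embedding `f` into `ℕ`. -/
def orderedEdges {W : Type} (G : SimpleGraph W) (f : W ↪ ℕ) : Set (ℕ × ℕ) :=
  {p | ∃ u v, G.Adj u v ∧ f u = p.1 ∧ f v = p.2 ∧ p.1 < p.2}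

/-- `G` admits a layout with `k` pages, each page satisfying `P`:
a vertex order (injection into `ℕ`) together with a partition of the
edges into `k` parts (given by the colouring `c`), each part satisfying `P`. -/
def HasLayout {W : Type} (G : SimpleGraph W) (k : ℕ)
    (P : Set (ℕ × ℕ) → Prop) : Prop :=
  ∃ (f : W ↪ ℕ) (c : ℕ × ℕ → Fin k),
    ∀ i : Fin k, P {p | p ∈ orderedEdges G f ∧ c p = i}

/-- `G` admits a `k`-stack layout. -/
def HasStackLayout {W : Type} (G : SimpleGraph W) (k : ℕ) : Prop :=
  HasLayout G k IsStack

/-- `G` admits a `k`-queue layout. -/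
def HasQueueLayout {W : Type} (G : SimpleGraph W) (k : ℕ) : Prop :=
  HasLayout G k IsQueue

/-- `G` admits a `k`-rique layout. -/
def HasRiqueLayout {W : Type} (G : SimpleGraph W) (k : ℕ) : Prop :=
  HasLayout G k IsRique

/-- `G` admits a `k`-deque layout. -/
def HasDequeLayout {W : Type} (G : SimpleGraph W) (k : ℕ) : Prop :=
  HasLayout G k IsDeque

/-- The stack-number of `G`. -/
noncomputable def stackNumber {W : Type} (G : SimpleGraph W) : ℕ :=
  sInf {k | HasStackLayout G k}

/-- The queue-number of `G`. -/
noncomputable def queueNumber {W : Type} (G : SimpleGraph W) : ℕ :=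
  sInf {k | HasQueueLayout G k}

/-- The rique-number of `G`. -/
noncomputable def riqueNumber {W : Type} (G : SimpleGraph W) : ℕ :=
  sInf {k | HasRiqueLayout G k}

/-- The deque-number of `G`. -/
noncomputable def dequeNumber {W : Type} (G : SimpleGraph W) : ℕ :=
  sInf {k | HasDequeLayout G k}


/-- predecessor of `b` in `S` (junk `0` if none) -/
def predS (S : Finset ℕ) (b : ℕ) : ℕ :=
  (insert 0 (S.filter (fun y => y < b))).max' (Finset.insert_nonempty _ _)

lemma le_predS {S : Finset ℕ} {x b : ℕ} (hx : x ∈ S) (hxb : x < b) :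
    x ≤ predS S b := by
  apply Finset.le_max'
  exact Finset.mem_insert_of_mem (Finset.mem_filter.2 ⟨hx, hxb⟩)

lemma predS_cases (S : Finset ℕ) (b : ℕ) :
    predS S b = 0 ∨ (predS S b ∈ S ∧ predS S b < b) := by
  have h2 := (insert 0 (S.filter (fun y => y < b))).max'_mem (Finset.insert_nonempty _ _)
  rcases Finset.mem_insert.1 h2 with h | h
  · exact Or.inl h
  · exact Or.inr ⟨(Finset.mem_filter.1 h).1, (Finset.mem_filter.1 h).2⟩

def phiF (S : Finset ℕ) (F : Finset (ℕ × ℕ)) (e : ℕ × ℕ) : ℕ :=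
  (insert (predS S e.2) ((F.filter (fun f => f.2 = e.2 ∧ e.1 < f.1)).image Prod.fst)).min'
    (Finset.insert_nonempty _ _)

lemma phiF_cases (S : Finset ℕ) (F : Finset (ℕ × ℕ)) (e : ℕ × ℕ) :
    phiF S F e = predS S e.2 ∨
      ∃ f ∈ F, f.2 = e.2 ∧ e.1 < f.1 ∧ phiF S F e = f.1 := by
  have h := (insert (predS S e.2) ((F.filter (fun f => f.2 = e.2 ∧ e.1 < f.1)).image Prod.fst)).min'_mem
    (Finset.insert_nonempty _ _)
  rcases Finset.mem_insert.1 h with h | h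
  · exact Or.inl h
  · obtain ⟨f, hf, hfe⟩ := Finset.mem_image.1 h
    obtain ⟨hfF, hf2, hf1⟩ := Finset.mem_filter.1 hf
    exact Or.inr ⟨f, hfF, hf2, hf1, hfe.symm⟩

lemma phiF_le {S : Finset ℕ} {F : Finset (ℕ × ℕ)} {e f : ℕ × ℕ} (hf : f ∈ F)
    (hfe : f.2 = e.2) (hef : e.1 < f.1) : phiF S F e ≤ f.1 :=
  Finset.min'_le _ _ (Finset.mem_insert_of_mem
    (Finset.mem_image.2 ⟨f, Finset.mem_filter.2 ⟨hf, hfe, hef⟩, rfl⟩))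

section phi

variable {S : Finset ℕ} {F : Finset (ℕ × ℕ)}
  (h1 : ∀ e ∈ F, e.1 ∈ S ∧ e.2 ∈ S ∧ e.1 < e.2)
  (h2 : ∀ e ∈ F, ∃ c ∈ S, e.1 < c ∧ c < e.2)
  (h3 : ∀ e ∈ F, ∀ f ∈ F, ¬(e.1 < f.1 ∧ f.1 < e.2 ∧ e.2 < f.2))

include h1 h2 in
lemma phiF_mem {e : ℕ × ℕ} (he : e ∈ F) :
    phiF S F e ∈ S ∧ e.1 < phiF S F e ∧ phiF S F e < e.2 := by
  obtain ⟨c, hcS, hc1, hc2⟩ := h2 e he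
  have hpl : c ≤ predS S e.2 := le_predS hcS hc2
  rcases phiF_cases S F e with h | ⟨f, hfF, hf2, hf1, hval⟩
  · rcases predS_cases S e.2 with h' | h'
    · omega
    · rw [h]; exact ⟨h'.1, by omega, h'.2⟩
  · obtain ⟨g1, g2, g3⟩ := h1 f hfF
    rw [hval]
    exact ⟨g1, hf1, by omega⟩

include h1 h2 h3 in
lemma phiF_ne_same {e e' : ℕ × ℕ} (he' : e' ∈ F)
    (hb : e.2 = e'.2) (ha : e.1 < e'.1) : phiF S F e ≠ phiF S F e' := by
  have k1 : phiF S F e ≤ e'.1 := phiF_le he' hb.symm ha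
  have k2 := (phiF_mem h1 h2 he').2.1
  omega

include h1 h2 h3 in
lemma phiF_ne_diff {e e' : ℕ × ℕ} (he : e ∈ F) (he' : e' ∈ F)
    (hb : e.2 < e'.2) : phiF S F e ≠ phiF S F e' := by
  intro heq
  have m1 := phiF_mem h1 h2 he
  rcases phiF_cases S F e' with h | ⟨f, hfF, hf2, hf1, hval⟩
  · have : e.2 ≤ predS S e'.2 := le_predS (h1 e he).2.1 hb
    omega
  · exact h3 e he f hfF ⟨by omega, by omega, by omega⟩

include h1 h2 h3 in
lemma phiF_injOn : Set.InjOn (phiF S F) F := by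
  intro e he e' he' heq
  by_contra hne
  rcases lt_trichotomy e.2 e'.2 with h | h | h
  · exact phiF_ne_diff h1 h2 h3 he he' h heq
  · rcases lt_trichotomy e.1 e'.1 with h' | h' | h'
    · exact phiF_ne_same h1 h2 h3 he' h h' heq
    · exact hne (Prod.ext h' h)
    · exact phiF_ne_same h1 h2 h3 he h.symm h' heq.symm
  · exact phiF_ne_diff h1 h2 h3 he' he h heq.symm

end phi


def interiorS (S : Finset ℕ) : Finset ℕ :=
  S.filter (fun x => (∃ y ∈ S, y < x) ∧ ∃ y ∈ S, x < y)

lemma interior_card {S : Finset ℕ} (hS : 2 ≤ S.card) :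
    (interiorS S).card + 2 = S.card := by
  have hne : S.Nonempty := Finset.card_pos.1 (by omega)
  have hmm : S.min' hne ∈ S := S.min'_mem hne
  have hMM : S.max' hne ∈ S := S.max'_mem hne
  have hlt : S.min' hne < S.max' hne := S.min'_lt_max'_of_card (by omega)
  have : interiorS S = (S.erase (S.min' hne)).erase (S.max' hne) := by
    ext x
    simp only [interiorS, Finset.mem_filter, Finset.mem_erase]
    constructor
    · rintro ⟨hx, ⟨y, hy, hyx⟩, ⟨z, hz, hxz⟩⟩
      have := S.le_max' z hz
      have := S.min'_le y hy
      exact ⟨by omega, by omega, hx⟩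
    · rintro ⟨hxM, hxm, hx⟩
      have := S.le_max' x hx
      have := S.min'_le x hx
      exact ⟨hx, ⟨S.min' hne, hmm, by omega⟩, ⟨S.max' hne, hMM, by omega⟩⟩
  rw [this, Finset.card_erase_of_mem, Finset.card_erase_of_mem hmm]
  · have h1 : 0 < (S.erase (S.min' hne)).card := by
      rw [Finset.card_erase_of_mem hmm]; omega
    omega
  · exact Finset.mem_erase.2 ⟨by omega, hMM⟩

section cnt

variable {S : Finset ℕ} {F : Finset (ℕ × ℕ)}
  (h1 : ∀ e ∈ F, e.1 ∈ S ∧ e.2 ∈ S ∧ e.1 < e.2)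
  (h2 : ∀ e ∈ F, ∃ c ∈ S, e.1 < c ∧ c < e.2)
  (h3 : ∀ e ∈ F, ∀ f ∈ F, ¬(e.1 < f.1 ∧ f.1 < e.2 ∧ e.2 < f.2))

include h1 h2 in
lemma phiF_interior {e : ℕ × ℕ} (he : e ∈ F) : phiF S F e ∈ interiorS S := by
  obtain ⟨hm, hl, hr⟩ := phiF_mem h1 h2 he
  obtain ⟨e1, e2, _⟩ := h1 e he
  exact Finset.mem_filter.2 ⟨hm, ⟨e.1, e1, hl⟩, ⟨e.2, e2, hr⟩⟩

include h1 h2 h3 in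
lemma phi_count (hS : 2 ≤ S.card) (X : Finset ℕ) (hXI : X ⊆ interiorS S)
    (hXF : ∀ x ∈ X, ∀ e ∈ F, ¬(e.1 < x ∧ x < e.2)) :
    F.card + X.card ≤ S.card - 2 := by
  have hinj : F.card ≤ (interiorS S \ X).card := by
    apply Finset.card_le_card_of_injOn (phiF S F)
    · intro e he
      refine Finset.mem_sdiff.2 ⟨phiF_interior h1 h2 he, fun hx => ?_⟩
      exact hXF _ hx e he ⟨(phiF_mem h1 h2 he).2.1, (phiF_mem h1 h2 he).2.2⟩
    · exact fun e he e' he' h => phiF_injOn h1 h2 h3 he he' h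
  have := Finset.card_sdiff_of_subset hXI
  have := interior_card hS
  have := Finset.card_le_card hXI
  omega

include h1 h2 h3 in
lemma phi_count' (hS : 3 ≤ S.card)
    (hns : ∀ e ∈ F, ∃ x ∈ S, x < e.1 ∨ e.2 < x) :
    F.card ≤ S.card - 3 := by
  have hne : S.Nonempty := Finset.card_pos.1 (by omega)
  set M := S.max' hne with hM
  have hMM : M ∈ S := S.max'_mem hne
  -- find a point y in the interior avoided by phiF
  have main : ∃ y ∈ interiorS S, ∀ e ∈ F, phiF S F e ≠ y := by
    by_cases hFM : ∃ f ∈ F, f.2 = M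
    · obtain ⟨f0, hf0, hf02⟩ := hFM
      have hFne : ((F.filter (fun f => f.2 = M)).image Prod.fst).Nonempty :=
        ⟨f0.1, Finset.mem_image.2 ⟨f0, Finset.mem_filter.2 ⟨hf0, hf02⟩, rfl⟩⟩
      set a1 := ((F.filter (fun f => f.2 = M)).image Prod.fst).min' hFne with ha1
      have hmem1 := Finset.min'_mem _ hFne
      obtain ⟨f1, hf1m, hf1⟩ := Finset.mem_image.1 hmem1
      rw [← ha1] at hf1
      obtain ⟨hf1F, hf12⟩ := Finset.mem_filter.1 hf1m
      have hf1S := h1 f1 hf1F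
      have ha1S : a1 ∈ S := by rw [← hf1]; exact hf1S.1
      have ha1M : a1 < M := by rw [← hf1]; omega
      have ha1m : S.min' hne < a1 := by
        rcases lt_or_eq_of_le (S.min'_le a1 ha1S) with h | h
        · exact h
        · exfalso
          obtain ⟨x, hx, hlt⟩ := hns f1 hf1F
          have := S.min'_le x hx
          have := S.le_max' x hx
          omega
      refine ⟨a1, Finset.mem_filter.2 ⟨ha1S, ⟨S.min' hne, S.min'_mem hne, ha1m⟩, ⟨M, hMM, ha1M⟩⟩, ?_⟩
      intro e he heq
      obtain ⟨hm, hl, hr⟩ := phiF_mem h1 h2 he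
      by_cases he2 : e.2 = M
      · have : a1 ≤ e.1 := Finset.min'_le _ _
          (Finset.mem_image.2 ⟨e, Finset.mem_filter.2 ⟨he, he2⟩, rfl⟩)
        omega
      · have he2M : e.2 < M := lt_of_le_of_ne (S.le_max' e.2 (h1 e he).2.1) he2
        exact h3 e he f1 hf1F ⟨by omega, by omega, by omega⟩
    · push_neg at hFM
      -- no edge ends at M; use predS S M
      have hIne : (interiorS S).Nonempty := by
        have := interior_card (show 2 ≤ S.card by omega)
        exact Finset.card_pos.1 (by omega)
      obtain ⟨c, hc⟩ := hIne
      obtain ⟨hcS, ⟨d, hd, hdc⟩, ⟨u, hu, hcu⟩⟩ := Finset.mem_filter.1 hc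
      have hcM : c < M := lt_of_lt_of_le hcu (S.le_max' u hu)
      set y := predS S M with hy
      have hcy : c ≤ y := le_predS hcS hcM
      have hyp : y ∈ S ∧ y < M := by
        rcases predS_cases S M with h | h
        · omega
        · exact h
      refine ⟨y, Finset.mem_filter.2 ⟨hyp.1, ⟨d, hd, by omega⟩, ⟨M, hMM, hyp.2⟩⟩, ?_⟩
      intro e he heq
      obtain ⟨hm, hl, hr⟩ := phiF_mem h1 h2 he
      have he2M : e.2 < M := lt_of_le_of_ne (S.le_max' e.2 (h1 e he).2.1) (hFM e he)
      have : e.2 ≤ y := le_predS (h1 e he).2.1 he2M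
      omega
  obtain ⟨y, hyI, hyF⟩ := main
  have hinj : F.card ≤ ((interiorS S).erase y).card := by
    apply Finset.card_le_card_of_injOn (phiF S F)
    · intro e he
      exact Finset.mem_erase.2 ⟨hyF e he, phiF_interior h1 h2 he⟩
    · exact fun e he e' he' h => phiF_injOn h1 h2 h3 he he' h
  rw [Finset.card_erase_of_mem hyI] at hinj
  have := interior_card (show 2 ≤ S.card by omega)
  omega

end cnt

section chain

lemma chain_count_aux (n : ℕ) : ∀ (W : Finset (ℕ × ℕ)) (α β p : (ℕ × ℕ) → ℕ),
    W.card ≤ n →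
    (∀ e ∈ W, ∀ e' ∈ W, p e = p e' → e = e') →
    (∀ e ∈ W, ∀ e' ∈ W, p e < p e' → α e' ≤ α e ∧ β e' ≤ β e) →
    (∀ e ∈ W, ∀ e' ∈ W, α e = α e' → β e = β e' → e = e') →
    W.Nonempty →
    W.card + 1 ≤ (W.image α).card + (W.image β).card := by
  induction n with
  | zero =>
    intro W α β p hc _ _ _ hne
    exact absurd (Finset.card_pos.2 hne) (by omega)
  | succ n ih =>
    intro W α β p hc hp hmono hne hWne
    obtain ⟨estar, hestar, hmax⟩ := W.exists_max_image p hWne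
    set W' := W.erase estar with hW'
    have hWin : W = insert estar W' := by
      rw [hW', Finset.insert_erase hestar]
    have hcard : W.card = W'.card + 1 := by
      rw [hW', Finset.card_erase_of_mem hestar]
      have := Finset.card_pos.2 hWne
      omega
    by_cases hW'ne : W'.Nonempty
    · have hsub : W' ⊆ W := Finset.erase_subset _ _
      have ihW' := ih W' α β p (by omega)
        (fun e he e' he' => hp e (hsub he) e' (hsub he'))
        (fun e he e' he' => hmono e (hsub he) e' (hsub he'))
        (fun e he e' he' => hne e (hsub he) e' (hsub he')) hW'ne
      have hkey : α estar ∉ W'.image α ∨ β estar ∉ W'.image β := by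
        by_contra hcon
        push_neg at hcon
        obtain ⟨hA, hB⟩ := hcon
        obtain ⟨u, hu, hua⟩ := Finset.mem_image.1 hA
        obtain ⟨v, hv, hvb⟩ := Finset.mem_image.1 hB
        have huW := hsub hu
        have hvW := hsub hv
        have hune : u ≠ estar := (Finset.mem_erase.1 hu).1
        have hvne : v ≠ estar := (Finset.mem_erase.1 hv).1
        have hpu : p u < p estar :=
          lt_of_le_of_ne (hmax u huW) (fun h => hune (hp u huW estar hestar h))
        have hpv : p v < p estar :=
          lt_of_le_of_ne (hmax v hvW) (fun h => hvne (hp v hvW estar hestar h))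
        have hu2 := hmono u huW estar hestar hpu
        have hv2 := hmono v hvW estar hestar hpv
        rcases lt_trichotomy (p u) (p v) with h | h | h
        · have := hmono u huW v hvW h
          exact hvne (hne v hvW estar hestar (by omega) (by omega))
        · have : u = v := hp u huW v hvW h
          subst this
          exact hune (hne u huW estar hestar hua hvb)
        · have := hmono v hvW u huW h
          exact hune (hne u huW estar hestar (by omega) (by omega))
      have himgsubA : W'.image α ⊆ W.image α := Finset.image_subset_image hsub
      have himgsubB : W'.image β ⊆ W.image β := Finset.image_subset_image hsub
      have hcA := Finset.card_le_card himgsubA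
      have hcB := Finset.card_le_card himgsubB
      rcases hkey with hk | hk
      · have : W.image α = insert (α estar) (W'.image α) := by
          rw [hWin, Finset.image_insert]
        rw [this, Finset.card_insert_of_notMem hk]
        omega
      · have : W.image β = insert (β estar) (W'.image β) := by
          rw [hWin, Finset.image_insert]
        rw [this, Finset.card_insert_of_notMem hk]
        omega
    · have : W = {estar} := by
        rw [hWin, Finset.not_nonempty_iff_eq_empty.1 hW'ne]
        rfl
      subst this
      simp
end chain

section key

lemma key (S : Finset ℕ) (hS : 3 ≤ S.card) (E : Finset (ℕ × ℕ))
    (hE : ∀ e ∈ E, e.1 ∈ S ∧ e.2 ∈ S ∧ e.1 < e.2)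
    (hD : IsDeque (↑E : Set (ℕ × ℕ))) :
    (E.filter (fun e => ∃ c ∈ S, e.1 < c ∧ c < e.2)).card ≤ 2 * S.card - 5 := by
  classical
  obtain ⟨typ, wrap, hInj, hU, hL⟩ := hD
  set α : ℕ × ℕ → ℕ := fun e => if typ e = EdgeType.ht then e.1 else e.2 with hα
  set β : ℕ × ℕ → ℕ := fun e => if typ e = EdgeType.ht then e.2 else e.1 with hβ
  have upper_hh : ∀ e, typ e = EdgeType.hh →
      upperIv typ wrap e = some (vtx e.1, vtx e.2) := by
    intro e h; simp [upperIv, h]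
  have lower_tt : ∀ e, typ e = EdgeType.tt →
      lowerIv typ wrap e = some (vtx e.1, vtx e.2) := by
    intro e h; simp [lowerIv, h]
  have upper_w : ∀ e, (typ e = EdgeType.ht ∨ typ e = EdgeType.th) →
      upperIv typ wrap e = some (vtx (α e), wpt (wrap e)) := by
    rintro e (h | h) <;> simp [upperIv, h, hα]
  have lower_w : ∀ e, (typ e = EdgeType.ht ∨ typ e = EdgeType.th) →
      lowerIv typ wrap e = some (vtx (β e), wpt (wrap e)) := by
    rintro e (h | h) <;> simp [lowerIv, h, hβ]
  have vlt : ∀ a b : ℕ, (vtx a : Ext ℕ) < vtx b ↔ a < b := fun a b => Sum.Lex.inl_lt_inl_iff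
  have vwlt : ∀ (a : ℕ) (m : ℕ), (vtx a : Ext ℕ) < wpt m := fun a m => Sum.Lex.inl_lt_inr a m
  have wplt : ∀ a b : ℕ, (wpt a : Ext ℕ) < wpt b ↔ a < b := fun a b => Sum.Lex.inr_lt_inr_iff
  -- derived combinatorial facts
  have der1U : ∀ e ∈ E, ∀ f ∈ E, typ e = EdgeType.hh → typ f = EdgeType.hh →
      ¬(e.1 < f.1 ∧ f.1 < e.2 ∧ e.2 < f.2) := by
    intro e he f hf h h' hc
    have := hU e he f hf _ (upper_hh e h) _ (upper_hh f h')
    exact this ⟨(vlt _ _).2 hc.1, (vlt _ _).2 hc.2.1, (vlt _ _).2 hc.2.2⟩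
  have der1L : ∀ e ∈ E, ∀ f ∈ E, typ e = EdgeType.tt → typ f = EdgeType.tt →
      ¬(e.1 < f.1 ∧ f.1 < e.2 ∧ e.2 < f.2) := by
    intro e he f hf h h' hc
    have := hL e he f hf _ (lower_tt e h) _ (lower_tt f h')
    exact this ⟨(vlt _ _).2 hc.1, (vlt _ _).2 hc.2.1, (vlt _ _).2 hc.2.2⟩
  have der2U : ∀ e ∈ E, ∀ f ∈ E, typ e = EdgeType.hh →
      (typ f = EdgeType.ht ∨ typ f = EdgeType.th) →
      ¬(e.1 < α f ∧ α f < e.2) := by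
    intro e he f hf h h' hc
    have := hU e he f hf _ (upper_hh e h) _ (upper_w f h')
    exact this ⟨(vlt _ _).2 hc.1, (vlt _ _).2 hc.2, vwlt _ _⟩
  have der2L : ∀ e ∈ E, ∀ f ∈ E, typ e = EdgeType.tt →
      (typ f = EdgeType.ht ∨ typ f = EdgeType.th) →
      ¬(e.1 < β f ∧ β f < e.2) := by
    intro e he f hf h h' hc
    have := hL e he f hf _ (lower_tt e h) _ (lower_w f h')
    exact this ⟨(vlt _ _).2 hc.1, (vlt _ _).2 hc.2, vwlt _ _⟩
  have der3 : ∀ e ∈ E, ∀ f ∈ E, (typ e = EdgeType.ht ∨ typ e = EdgeType.th) →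
      (typ f = EdgeType.ht ∨ typ f = EdgeType.th) → wrap e < wrap f →
      α f ≤ α e ∧ β f ≤ β e := by
    intro e he f hf h h' hw
    constructor
    · by_contra hcon
      push_neg at hcon
      have := hU e he f hf _ (upper_w e h) _ (upper_w f h')
      exact this ⟨(vlt _ _).2 hcon, vwlt _ _, (wplt _ _).2 hw⟩
    · by_contra hcon
      push_neg at hcon
      have := hL e he f hf _ (lower_w e h) _ (lower_w f h')
      exact this ⟨(vlt _ _).2 hcon, vwlt _ _, (wplt _ _).2 hw⟩
  have hαβ : ∀ e ∈ E, (typ e = EdgeType.ht ∨ typ e = EdgeType.th) →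
      α e ∈ S ∧ β e ∈ S ∧ α e ≠ β e ∧ e.1 = min (α e) (β e) ∧ e.2 = max (α e) (β e) := by
    intro e he h
    obtain ⟨h1, h2, h3⟩ := hE e he
    rcases h with h | h
    · have hae : α e = e.1 := by simp only [hα]; exact if_pos h
      have hbe : β e = e.2 := by simp only [hβ]; exact if_pos h
      rw [hae, hbe]
      exact ⟨h1, h2, by omega, by omega, by omega⟩
    · have hne : typ e ≠ EdgeType.ht := by rw [h]; intro hcon; cases hcon
      have hae : α e = e.2 := by simp only [hα]; exact if_neg hne
      have hbe : β e = e.1 := by simp only [hβ]; exact if_neg hne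
      rw [hae, hbe]
      exact ⟨h2, h1, by omega, by omega, by omega⟩
  have hSne : S.Nonempty := Finset.card_pos.1 (by omega)
  set m := S.min' hSne with hm
  set M := S.max' hSne with hM
  set NS : ℕ × ℕ → Prop := fun e => ∃ c ∈ S, e.1 < c ∧ c < e.2 with hNS
  set HH' := E.filter (fun e => typ e = EdgeType.hh ∧ NS e) with hHH
  set TT' := E.filter (fun e => typ e = EdgeType.tt ∧ NS e) with hTT
  set Wr := E.filter (fun e => typ e = EdgeType.ht ∨ typ e = EdgeType.th) with hWr
  set W' := E.filter (fun e => (typ e = EdgeType.ht ∨ typ e = EdgeType.th) ∧ NS e) with hW'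
  have hsplit : (E.filter (fun e => ∃ c ∈ S, e.1 < c ∧ c < e.2)).card ≤
      HH'.card + TT'.card + W'.card := by
    have hsub : E.filter (fun e => ∃ c ∈ S, e.1 < c ∧ c < e.2) ⊆ (HH' ∪ TT') ∪ W' := by
      intro e he
      obtain ⟨heE, hens⟩ := Finset.mem_filter.1 he
      simp only [Finset.mem_union, hHH, hTT, hW', Finset.mem_filter]
      cases h : typ e
      · exact Or.inl (Or.inl ⟨heE, rfl, hens⟩)
      · exact Or.inl (Or.inr ⟨heE, rfl, hens⟩)
      · exact Or.inr ⟨heE, Or.inl rfl, hens⟩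
      · exact Or.inr ⟨heE, Or.inr rfl, hens⟩
    calc (E.filter (fun e => ∃ c ∈ S, e.1 < c ∧ c < e.2)).card
        ≤ ((HH' ∪ TT') ∪ W').card := Finset.card_le_card hsub
      _ ≤ (HH' ∪ TT').card + W'.card := Finset.card_union_le _ _
      _ ≤ HH'.card + TT'.card + W'.card := by
          have := Finset.card_union_le HH' TT'
          omega
  -- hypotheses for phi on HH' and TT'
  have hHH1 : ∀ e ∈ HH', e.1 ∈ S ∧ e.2 ∈ S ∧ e.1 < e.2 :=
    fun e he => hE e (Finset.mem_filter.1 he).1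
  have hHH2 : ∀ e ∈ HH', ∃ c ∈ S, e.1 < c ∧ c < e.2 :=
    fun e he => (Finset.mem_filter.1 he).2.2
  have hHH3 : ∀ e ∈ HH', ∀ f ∈ HH', ¬(e.1 < f.1 ∧ f.1 < e.2 ∧ e.2 < f.2) := by
    intro e he f hf
    obtain ⟨heE, het, _⟩ := Finset.mem_filter.1 he
    obtain ⟨hfE, hft, _⟩ := Finset.mem_filter.1 hf
    exact der1U e heE f hfE het hft
  have hTT1 : ∀ e ∈ TT', e.1 ∈ S ∧ e.2 ∈ S ∧ e.1 < e.2 :=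
    fun e he => hE e (Finset.mem_filter.1 he).1
  have hTT2 : ∀ e ∈ TT', ∃ c ∈ S, e.1 < c ∧ c < e.2 :=
    fun e he => (Finset.mem_filter.1 he).2.2
  have hTT3 : ∀ e ∈ TT', ∀ f ∈ TT', ¬(e.1 < f.1 ∧ f.1 < e.2 ∧ e.2 < f.2) := by
    intro e he f hf
    obtain ⟨heE, het, _⟩ := Finset.mem_filter.1 he
    obtain ⟨hfE, hft, _⟩ := Finset.mem_filter.1 hf
    exact der1L e heE f hfE het hft
  by_cases hWe : Wr = ∅
  · -- no wrap edges
    have hW'0 : W'.card = 0 := by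
      rw [Finset.card_eq_zero]
      rw [Finset.eq_empty_iff_forall_notMem]
      intro e he
      obtain ⟨heE, het, _⟩ := Finset.mem_filter.1 he
      have : e ∈ Wr := Finset.mem_filter.2 ⟨heE, het⟩
      rw [hWe] at this
      exact absurd this (Finset.notMem_empty e)
    have hdisj : ¬((m, M) ∈ HH' ∧ (m, M) ∈ TT') := by
      rintro ⟨h1, h2⟩
      have t1 := (Finset.mem_filter.1 h1).2.1
      have t2 := (Finset.mem_filter.1 h2).2.1
      rw [t1] at t2; cases t2
    have key2 : ∀ (F : Finset (ℕ × ℕ)), (∀ e ∈ F, e.1 ∈ S ∧ e.2 ∈ S ∧ e.1 < e.2) →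
        (∀ e ∈ F, ∃ c ∈ S, e.1 < c ∧ c < e.2) →
        (∀ e ∈ F, ∀ f ∈ F, ¬(e.1 < f.1 ∧ f.1 < e.2 ∧ e.2 < f.2)) →
        (m, M) ∉ F → F.card ≤ S.card - 3 := by
      intro F f1 f2 f3 hnotin
      apply phi_count' f1 f2 f3 hS
      intro e heF
      by_cases h1 : e.1 = m
      · by_cases h2 : e.2 = M
        · exfalso; apply hnotin; rwa [show (m, M) = e by rw [← h1, ← h2]]
        · have : e.2 < M := lt_of_le_of_ne (S.le_max' e.2 (f1 e heF).2.1) h2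
          exact ⟨M, S.max'_mem hSne, Or.inr this⟩
      · have : m < e.1 := lt_of_le_of_ne (S.min'_le e.1 (f1 e heF).1) (fun h => h1 h.symm)
        exact ⟨m, S.min'_mem hSne, Or.inl this⟩
    have keyn2 : ∀ (F : Finset (ℕ × ℕ)), (∀ e ∈ F, e.1 ∈ S ∧ e.2 ∈ S ∧ e.1 < e.2) →
        (∀ e ∈ F, ∃ c ∈ S, e.1 < c ∧ c < e.2) →
        (∀ e ∈ F, ∀ f ∈ F, ¬(e.1 < f.1 ∧ f.1 < e.2 ∧ e.2 < f.2)) →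
        F.card ≤ S.card - 2 := by
      intro F f1 f2 f3
      have := phi_count f1 f2 f3 (by omega) ∅ (Finset.empty_subset _) (by simp)
      simpa using this
    by_cases hin : (m, M) ∈ HH'
    · have b1 : HH'.card ≤ S.card - 2 := keyn2 HH' hHH1 hHH2 hHH3
      have b2 : TT'.card ≤ S.card - 3 :=
        key2 TT' hTT1 hTT2 hTT3 (fun h => hdisj ⟨hin, h⟩)
      omega
    · have b1 : HH'.card ≤ S.card - 3 := key2 HH' hHH1 hHH2 hHH3 hin
      have b2 : TT'.card ≤ S.card - 2 := keyn2 TT' hTT1 hTT2 hTT3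
      omega
  · -- wrap edges exist
    have hWne : Wr.Nonempty := Finset.nonempty_of_ne_empty hWe
    have hWrE : ∀ e ∈ Wr, e ∈ E := fun e he => (Finset.mem_filter.1 he).1
    have hWrt : ∀ e ∈ Wr, typ e = EdgeType.ht ∨ typ e = EdgeType.th :=
      fun e he => (Finset.mem_filter.1 he).2
    set A := Wr.image α with hA
    set B := Wr.image β with hB
    obtain ⟨e1, he1, hmin1⟩ := Wr.exists_min_image wrap hWne
    obtain ⟨es, hes, hmaxs⟩ := Wr.exists_max_image wrap hWne
    have hmono : ∀ e ∈ Wr, ∀ f ∈ Wr, wrap e < wrap f → α f ≤ α e ∧ β f ≤ β e :=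
      fun e he f hf h => der3 e (hWrE e he) f (hWrE f hf) (hWrt e he) (hWrt f hf) h
    have hpinj : ∀ e ∈ Wr, ∀ f ∈ Wr, wrap e = wrap f → e = f :=
      fun e he f hf h => hInj e (hWrE e he) f (hWrE f hf) (hWrt e he) (hWrt f hf) h
    have hαβ' : ∀ e ∈ Wr,
        α e ∈ S ∧ β e ∈ S ∧ α e ≠ β e ∧ e.1 = min (α e) (β e) ∧ e.2 = max (α e) (β e) :=
      fun e he => hαβ e (hWrE e he) (hWrt e he)
    have hαs : ∀ e ∈ Wr, α es ≤ α e ∧ β es ≤ β e := by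
      intro e he
      rcases eq_or_ne e es with rfl | hne
      · exact ⟨le_refl _, le_refl _⟩
      · have h1 : wrap e ≠ wrap es := fun h => hne (hpinj e he es hes h)
        exact hmono e he es hes (lt_of_le_of_ne (hmaxs e he) h1)
    have hα1 : ∀ e ∈ Wr, α e ≤ α e1 ∧ β e ≤ β e1 := by
      intro e he
      rcases eq_or_ne e e1 with rfl | hne
      · exact ⟨le_refl _, le_refl _⟩
      · have h1 : wrap e1 ≠ wrap e := fun h => hne ((hpinj e1 he1 e he h).symm)
        exact hmono e1 he1 e he (lt_of_le_of_ne (hmin1 e he) h1)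
    have exclm : ¬(m ∈ A ∧ m ∈ B) := by
      rintro ⟨hmA, hmB⟩
      obtain ⟨u, hu, hua⟩ := Finset.mem_image.1 hmA
      obtain ⟨v, hv, hvb⟩ := Finset.mem_image.1 hmB
      obtain ⟨hu1, hu2, hu3, _, _⟩ := hαβ' u hu
      obtain ⟨hv1, hv2, hv3, _, _⟩ := hαβ' v hv
      rcases lt_trichotomy (wrap u) (wrap v) with h | h | h
      · have h2 := (hmono u hu v hv h).1
        have h4 := S.min'_le (α v) hv1
        rw [hua] at h2
        exact hv3 (by omega)
      · have : u = v := hpinj u hu v hv h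
        subst this
        exact hu3 (by omega)
      · have h2 := (hmono v hv u hu h).2
        have h4 := S.min'_le (β u) hu2
        rw [hvb] at h2
        exact hu3 (by omega)
    have exclM : ¬(M ∈ A ∧ M ∈ B) := by
      rintro ⟨hMA, hMB⟩
      obtain ⟨u, hu, hua⟩ := Finset.mem_image.1 hMA
      obtain ⟨v, hv, hvb⟩ := Finset.mem_image.1 hMB
      obtain ⟨hu1, hu2, hu3, _, _⟩ := hαβ' u hu
      obtain ⟨hv1, hv2, hv3, _, _⟩ := hαβ' v hv
      rcases lt_trichotomy (wrap u) (wrap v) with h | h | h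
      · have h2 := (hmono u hu v hv h).2
        have h4 := S.le_max' (β u) hu2
        rw [hvb] at h2
        exact hu3 (by omega)
      · have : u = v := hpinj u hu v hv h
        subst this
        exact hu3 (by omega)
      · have h2 := (hmono v hv u hu h).1
        have h4 := S.le_max' (α v) hv1
        rw [hua] at h2
        exact hv3 (by omega)
    -- coordinates of the trick edges
    have firedmB : m ∈ B → es.1 = m ∧ es.2 = α es ∧ β es = m := by
      intro hmB
      obtain ⟨v, hv, hvb⟩ := Finset.mem_image.1 hmB
      obtain ⟨hs1, hs2, hs3, hs4, hs5⟩ := hαβ' es hes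
      have h1 : β es ≤ m := by rw [← hvb]; exact (hαs v hv).2
      have h2 : m ≤ β es := S.min'_le _ hs2
      have h3 : β es = m := le_antisymm h1 h2
      have hesE := hE es (hWrE es hes)
      have h4 : m ≤ α es := S.min'_le _ hs1
      refine ⟨by omega, by omega, h3⟩
    have firedMB : M ∈ B → e1.2 = M ∧ e1.1 = α e1 ∧ β e1 = M := by
      intro hMB
      obtain ⟨v, hv, hvb⟩ := Finset.mem_image.1 hMB
      obtain ⟨hs1, hs2, hs3, hs4, hs5⟩ := hαβ' e1 he1
      have h1 : β e1 ≤ M := S.le_max' _ hs2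
      have h2 : M ≤ β e1 := by rw [← hvb]; exact (hα1 v hv).2
      have h3 : β e1 = M := le_antisymm h1 h2
      have h4 : α e1 ≤ M := S.le_max' _ hs1
      refine ⟨by omega, by omega, h3⟩
    have firedmA : m ∈ A → es.1 = m ∧ es.2 = β es ∧ α es = m := by
      intro hmA
      obtain ⟨v, hv, hvb⟩ := Finset.mem_image.1 hmA
      obtain ⟨hs1, hs2, hs3, hs4, hs5⟩ := hαβ' es hes
      have h1 : α es ≤ m := by rw [← hvb]; exact (hαs v hv).1
      have h2 : m ≤ α es := S.min'_le _ hs1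
      have h3 : α es = m := le_antisymm h1 h2
      have h4 : m ≤ β es := S.min'_le _ hs2
      refine ⟨by omega, by omega, h3⟩
    have firedMA : M ∈ A → e1.2 = M ∧ e1.1 = β e1 ∧ α e1 = M := by
      intro hMA
      obtain ⟨v, hv, hvb⟩ := Finset.mem_image.1 hMA
      obtain ⟨hs1, hs2, hs3, hs4, hs5⟩ := hαβ' e1 he1
      have h1 : α e1 ≤ M := S.le_max' _ hs1
      have h2 : M ≤ α e1 := by rw [← hvb]; exact (hα1 v hv).1
      have h3 : α e1 = M := le_antisymm h1 h2
      have h4 : β e1 ≤ M := S.le_max' _ hs2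
      refine ⟨by omega, by omega, h3⟩
    set Vh : Finset (ℕ × ℕ) :=
      (if m ∈ B then {es} else ∅) ∪ (if M ∈ B then {e1} else ∅) with hVh
    set Vt : Finset (ℕ × ℕ) :=
      (if m ∈ A then {es} else ∅) ∪ (if M ∈ A then {e1} else ∅) with hVt
    have hVhmem : ∀ x ∈ Vh, (m ∈ B ∧ x = es) ∨ (M ∈ B ∧ x = e1) := by
      intro x hx
      rw [hVh] at hx
      rcases Finset.mem_union.1 hx with h | h
      · split_ifs at h with h'
        · exact Or.inl ⟨h', Finset.mem_singleton.1 h⟩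
        · exact absurd h (Finset.notMem_empty x)
      · split_ifs at h with h'
        · exact Or.inr ⟨h', Finset.mem_singleton.1 h⟩
        · exact absurd h (Finset.notMem_empty x)
    have hVtmem : ∀ x ∈ Vt, (m ∈ A ∧ x = es) ∨ (M ∈ A ∧ x = e1) := by
      intro x hx
      rw [hVt] at hx
      rcases Finset.mem_union.1 hx with h | h
      · split_ifs at h with h'
        · exact Or.inl ⟨h', Finset.mem_singleton.1 h⟩
        · exact absurd h (Finset.notMem_empty x)
      · split_ifs at h with h'
        · exact Or.inr ⟨h', Finset.mem_singleton.1 h⟩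
        · exact absurd h (Finset.notMem_empty x)
    have hVhsub : Vh ⊆ Wr := by
      intro x hx
      rcases hVhmem x hx with ⟨_, rfl⟩ | ⟨_, rfl⟩
      · exact hes
      · exact he1
    have hVtsub : Vt ⊆ Wr := by
      intro x hx
      rcases hVtmem x hx with ⟨_, rfl⟩ | ⟨_, rfl⟩
      · exact hes
      · exact he1
    set FH := HH' ∪ Vh.filter NS with hFH
    set FT := TT' ∪ Vt.filter NS with hFT
    have hFHmem : ∀ e ∈ FH, e ∈ HH' ∨ ((m ∈ B ∧ e = es) ∨ (M ∈ B ∧ e = e1)) := by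
      intro e he
      rcases Finset.mem_union.1 he with h | h
      · exact Or.inl h
      · exact Or.inr (hVhmem e (Finset.mem_filter.1 h).1)
    have hFTmem : ∀ e ∈ FT, e ∈ TT' ∨ ((m ∈ A ∧ e = es) ∨ (M ∈ A ∧ e = e1)) := by
      intro e he
      rcases Finset.mem_union.1 he with h | h
      · exact Or.inl h
      · exact Or.inr (hVtmem e (Finset.mem_filter.1 h).1)
    have hFH1 : ∀ e ∈ FH, e.1 ∈ S ∧ e.2 ∈ S ∧ e.1 < e.2 := by
      intro e he
      rcases Finset.mem_union.1 he with h | h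
      · exact hHH1 e h
      · exact hE e (hWrE e (hVhsub (Finset.mem_filter.1 h).1))
    have hFT1 : ∀ e ∈ FT, e.1 ∈ S ∧ e.2 ∈ S ∧ e.1 < e.2 := by
      intro e he
      rcases Finset.mem_union.1 he with h | h
      · exact hTT1 e h
      · exact hE e (hWrE e (hVtsub (Finset.mem_filter.1 h).1))
    have hFH2 : ∀ e ∈ FH, ∃ c ∈ S, e.1 < c ∧ c < e.2 := by
      intro e he
      rcases Finset.mem_union.1 he with h | h
      · exact hHH2 e h
      · exact (Finset.mem_filter.1 h).2
    have hFT2 : ∀ e ∈ FT, ∃ c ∈ S, e.1 < c ∧ c < e.2 := by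
      intro e he
      rcases Finset.mem_union.1 he with h | h
      · exact hTT2 e h
      · exact (Finset.mem_filter.1 h).2
    have hHHt : ∀ e ∈ HH', typ e = EdgeType.hh := fun e he => (Finset.mem_filter.1 he).2.1
    have hTTt : ∀ e ∈ TT', typ e = EdgeType.tt := fun e he => (Finset.mem_filter.1 he).2.1
    have hHHE : ∀ e ∈ HH', e ∈ E := fun e he => (Finset.mem_filter.1 he).1
    have hTTE : ∀ e ∈ TT', e ∈ E := fun e he => (Finset.mem_filter.1 he).1
    have hFH3 : ∀ e ∈ FH, ∀ f ∈ FH, ¬(e.1 < f.1 ∧ f.1 < e.2 ∧ e.2 < f.2) := by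
      intro e he f hf hc
      rcases hFHmem e he with heH | ⟨⟨hmB, hee⟩ | ⟨hMB, hee⟩⟩ <;>
        rcases hFHmem f hf with hfH | ⟨⟨hmB', hfe⟩ | ⟨hMB', hfe⟩⟩
      · exact hHH3 e heH f hfH hc
      · rw [hfe] at hc
        have := (firedmB hmB').1
        have := S.min'_le e.1 (hHH1 e heH).1
        omega
      · rw [hfe] at hc
        have h1 := (firedMB hMB').2.1
        exact der2U e (hHHE e heH) e1 (hWrE e1 he1) (hHHt e heH) (hWrt e1 he1)
          ⟨by omega, by omega⟩
      · rw [hee] at hc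
        have h1 := (firedmB hmB).2.1
        exact der2U f (hHHE f hfH) es (hWrE es hes) (hHHt f hfH) (hWrt es hes)
          ⟨by omega, by omega⟩
      · rw [hee, hfe] at hc
        exact absurd hc.1 (lt_irrefl _)
      · rw [hee, hfe] at hc
        have h1 := (firedmB hmB).2.1
        have h2 := (firedMB hMB').2.1
        have h3 := (hαs e1 he1).1
        omega
      · rw [hee] at hc
        have h1 := (firedMB hMB).1
        have := S.le_max' f.2 (hHH1 f hfH).2.1
        omega
      · rw [hee, hfe] at hc
        have h1 := (firedmB hmB').1
        have h2 := (firedMB hMB).2.1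
        have := S.min'_le e1.1 (hE e1 (hWrE e1 he1)).1
        omega
      · rw [hee, hfe] at hc
        exact absurd hc.1 (lt_irrefl _)
    have hFT3 : ∀ e ∈ FT, ∀ f ∈ FT, ¬(e.1 < f.1 ∧ f.1 < e.2 ∧ e.2 < f.2) := by
      intro e he f hf hc
      rcases hFTmem e he with heH | ⟨⟨hmA, hee⟩ | ⟨hMA, hee⟩⟩ <;>
        rcases hFTmem f hf with hfH | ⟨⟨hmA', hfe⟩ | ⟨hMA', hfe⟩⟩
      · exact hTT3 e heH f hfH hc
      · rw [hfe] at hc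
        have := (firedmA hmA').1
        have := S.min'_le e.1 (hTT1 e heH).1
        omega
      · rw [hfe] at hc
        have h1 := (firedMA hMA').2.1
        exact der2L e (hTTE e heH) e1 (hWrE e1 he1) (hTTt e heH) (hWrt e1 he1)
          ⟨by omega, by omega⟩
      · rw [hee] at hc
        have h1 := (firedmA hmA).2.1
        exact der2L f (hTTE f hfH) es (hWrE es hes) (hTTt f hfH) (hWrt es hes)
          ⟨by omega, by omega⟩
      · rw [hee, hfe] at hc
        exact absurd hc.1 (lt_irrefl _)
      · rw [hee, hfe] at hc
        have h1 := (firedmA hmA).2.1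
        have h2 := (firedMA hMA').2.1
        have h3 := (hαs e1 he1).2
        omega
      · rw [hee] at hc
        have h1 := (firedMA hMA).1
        have := S.le_max' f.2 (hTT1 f hfH).2.1
        omega
      · rw [hee, hfe] at hc
        have h1 := (firedmA hmA').1
        have h2 := (firedMA hMA).2.1
        have := S.min'_le e1.1 (hE e1 (hWrE e1 he1)).1
        omega
      · rw [hee, hfe] at hc
        exact absurd hc.1 (lt_irrefl _)
    -- avoidance sets
    set XA := A.filter (fun x => x ∈ interiorS S) with hXA
    set XB := B.filter (fun x => x ∈ interiorS S) with hXB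
    have hXAsub : XA ⊆ interiorS S := fun x hx => (Finset.mem_filter.1 hx).2
    have hXBsub : XB ⊆ interiorS S := fun x hx => (Finset.mem_filter.1 hx).2
    have hXAav : ∀ x ∈ XA, ∀ e ∈ FH, ¬(e.1 < x ∧ x < e.2) := by
      intro x hx e he hc
      obtain ⟨hxA, hxI⟩ := Finset.mem_filter.1 hx
      obtain ⟨u, hu, hua⟩ := Finset.mem_image.1 hxA
      rcases hFHmem e he with heH | ⟨⟨hmB, hee⟩ | ⟨hMB, hee⟩⟩
      · exact der2U e (hHHE e heH) u (hWrE u hu) (hHHt e heH) (hWrt u hu)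
          (by rw [hua]; exact hc)
      · rw [hee] at hc
        have h1 := (firedmB hmB).2.1
        have h2 := (hαs u hu).1
        omega
      · rw [hee] at hc
        have h1 := (firedMB hMB).2.1
        have h2 := (hα1 u hu).1
        omega
    have hXBav : ∀ x ∈ XB, ∀ e ∈ FT, ¬(e.1 < x ∧ x < e.2) := by
      intro x hx e he hc
      obtain ⟨hxB, hxI⟩ := Finset.mem_filter.1 hx
      obtain ⟨u, hu, hua⟩ := Finset.mem_image.1 hxB
      rcases hFTmem e he with heH | ⟨⟨hmA, hee⟩ | ⟨hMA, hee⟩⟩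
      · exact der2L e (hTTE e heH) u (hWrE u hu) (hTTt e heH) (hWrt u hu)
          (by rw [hua]; exact hc)
      · rw [hee] at hc
        have h1 := (firedmA hmA).2.1
        have h2 := (hαs u hu).2
        omega
      · rw [hee] at hc
        have h1 := (firedMA hMA).2.1
        have h2 := (hα1 u hu).2
        omega
    have q1 : FH.card + XA.card ≤ S.card - 2 :=
      phi_count hFH1 hFH2 hFH3 (by omega) XA hXAsub hXAav
    have q2 : FT.card + XB.card ≤ S.card - 2 :=
      phi_count hFT1 hFT2 hFT3 (by omega) XB hXBsub hXBav
    -- the chain bound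
    have hchain : Wr.card + 1 ≤ A.card + B.card := by
      refine chain_count_aux Wr.card Wr α β wrap le_rfl hpinj hmono ?_ hWne
      intro e he f hf h1 h2
      obtain ⟨_, _, _, he4, he5⟩ := hαβ' e he
      obtain ⟨_, _, _, hf4, hf5⟩ := hαβ' f hf
      apply Prod.ext
      · rw [he4, hf4, h1, h2]
      · rw [he5, hf5, h1, h2]
    -- splitting A and B at the extremes
    have hmM : m < M := S.min'_lt_max'_of_card (by omega)
    have hIchar : ∀ x ∈ S, (x ∈ interiorS S ↔ ¬(x = m ∨ x = M)) := by
      intro x hxS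
      constructor
      · intro hxI h
        obtain ⟨_, ⟨y, hy, hyx⟩, ⟨z, hz, hxz⟩⟩ := Finset.mem_filter.1 hxI
        have := S.min'_le y hy
        have := S.le_max' z hz
        rcases h with rfl | rfl <;> omega
      · intro hx
        push_neg at hx
        have h1 : m ≤ x := S.min'_le x hxS
        have h2 : x ≤ M := S.le_max' x hxS
        refine Finset.mem_filter.2 ⟨hxS, ⟨m, S.min'_mem hSne, ?_⟩, ⟨M, S.max'_mem hSne, ?_⟩⟩
        · exact lt_of_le_of_ne h1 (fun h => hx.1 h.symm)
        · exact lt_of_le_of_ne h2 hx.2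
    have hAS : ∀ x ∈ A, x ∈ S := by
      intro x hx
      obtain ⟨u, hu, hua⟩ := Finset.mem_image.1 hx
      rw [← hua]; exact (hαβ' u hu).1
    have hBS : ∀ x ∈ B, x ∈ S := by
      intro x hx
      obtain ⟨u, hu, hua⟩ := Finset.mem_image.1 hx
      rw [← hua]; exact (hαβ' u hu).2.1
    have hAsplit : XA.card + (A.filter (fun x => x = m ∨ x = M)).card = A.card := by
      rw [hXA, ← Finset.card_filter_add_card_filter_not
        (p := fun x => x ∈ interiorS S) (s := A)]
      congr 2
      apply Finset.filter_congr
      intro x hx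
      simp only [hIchar x (hAS x hx), not_not]
    have hBsplit : XB.card + (B.filter (fun x => x = m ∨ x = M)).card = B.card := by
      rw [hXB, ← Finset.card_filter_add_card_filter_not
        (p := fun x => x ∈ interiorS S) (s := B)]
      congr 2
      apply Finset.filter_congr
      intro x hx
      simp only [hIchar x (hBS x hx), not_not]
    have hcnt : ∀ (C : Finset ℕ), (C.filter (fun x => x = m ∨ x = M)).card =
        (if m ∈ C then 1 else 0) + (if M ∈ C then 1 else 0) := by
      intro C
      by_cases h1 : m ∈ C <;> by_cases h2 : M ∈ C <;>
        simp only [h1, h2, if_true, if_false]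
      · have : C.filter (fun x => x = m ∨ x = M) = {m, M} := by
          ext x
          simp only [Finset.mem_filter, Finset.mem_insert, Finset.mem_singleton]
          constructor
          · rintro ⟨_, h⟩; exact h
          · rintro (rfl | rfl)
            exacts [⟨h1, Or.inl rfl⟩, ⟨h2, Or.inr rfl⟩]
        rw [this, Finset.card_insert_of_notMem (by simp; omega), Finset.card_singleton]
      · have : C.filter (fun x => x = m ∨ x = M) = {m} := by
          ext x
          simp only [Finset.mem_filter, Finset.mem_singleton]
          constructor
          · rintro ⟨hxC, rfl | rfl⟩
            · rfl
            · exact absurd hxC h2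
          · rintro rfl; exact ⟨h1, Or.inl rfl⟩
        rw [this, Finset.card_singleton]
      · have : C.filter (fun x => x = m ∨ x = M) = {M} := by
          ext x
          simp only [Finset.mem_filter, Finset.mem_singleton]
          constructor
          · rintro ⟨hxC, rfl | rfl⟩
            · exact absurd hxC h1
            · rfl
          · rintro rfl; exact ⟨h2, Or.inr rfl⟩
        rw [this, Finset.card_singleton]
      · have : C.filter (fun x => x = m ∨ x = M) = ∅ := by
          rw [Finset.filter_eq_empty_iff]
          rintro x hxC (rfl | rfl)
          · exact h1 hxC
          · exact h2 hxC
        rw [this, Finset.card_empty]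
    -- cardinalities of the virtual sets
    have hVhcard : Vh.card = (if m ∈ B then 1 else 0) + (if M ∈ B then 1 else 0) := by
      rw [hVh]
      by_cases h1 : m ∈ B <;> by_cases h2 : M ∈ B <;>
        simp only [h1, h2, if_true, if_false, Finset.union_empty, Finset.empty_union,
          Finset.card_singleton, Finset.card_empty]
      have hne : es ≠ e1 := by
        intro h
        have a1 := (firedmB h1).2.2
        have a2 := (firedMB h2).2.2
        rw [h] at a1
        omega
      rw [← Finset.insert_eq, Finset.card_insert_of_notMem (by simpa using hne),
        Finset.card_singleton]
    have hVtcard : Vt.card = (if m ∈ A then 1 else 0) + (if M ∈ A then 1 else 0) := by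
      rw [hVt]
      by_cases h1 : m ∈ A <;> by_cases h2 : M ∈ A <;>
        simp only [h1, h2, if_true, if_false, Finset.union_empty, Finset.empty_union,
          Finset.card_singleton, Finset.card_empty]
      have hne : es ≠ e1 := by
        intro h
        have a1 := (firedmA h1).2.2
        have a2 := (firedMA h2).2.2
        rw [h] at a1
        omega
      rw [← Finset.insert_eq, Finset.card_insert_of_notMem (by simpa using hne),
        Finset.card_singleton]
    -- decomposing FH, FT
    have hHHVh : Disjoint HH' (Vh.filter NS) := by
      rw [Finset.disjoint_left]
      intro x hx1 hx2
      have h1 := hHHt x hx1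
      have h2 := hWrt x (hVhsub (Finset.mem_filter.1 hx2).1)
      rcases h2 with h2 | h2 <;> rw [h1] at h2 <;> simp at h2
    have hTTVt : Disjoint TT' (Vt.filter NS) := by
      rw [Finset.disjoint_left]
      intro x hx1 hx2
      have h1 := hTTt x hx1
      have h2 := hWrt x (hVtsub (Finset.mem_filter.1 hx2).1)
      rcases h2 with h2 | h2 <;> rw [h1] at h2 <;> simp at h2
    have hFHcard : FH.card = HH'.card + (Vh.filter NS).card :=
      Finset.card_union_of_disjoint hHHVh
    have hFTcard : FT.card = TT'.card + (Vt.filter NS).card :=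
      Finset.card_union_of_disjoint hTTVt
    have hVhsplit : (Vh.filter NS).card + (Vh.filter (fun e => ¬ NS e)).card = Vh.card :=
      Finset.card_filter_add_card_filter_not _
    have hVtsplit : (Vt.filter NS).card + (Vt.filter (fun e => ¬ NS e)).card = Vt.card :=
      Finset.card_filter_add_card_filter_not _
    -- discount: non-spine wrap edges together with spine virtuals fit inside Wr
    have hIne : (interiorS S).Nonempty := by
      have := interior_card (show 2 ≤ S.card by omega)
      exact Finset.card_pos.1 (by omega)
    have hNSmM : ∀ x : ℕ × ℕ, x.1 = m → x.2 = M → NS x := by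
      intro x h1 h2
      obtain ⟨c, hc⟩ := hIne
      obtain ⟨hcS, ⟨y, hy, hyc⟩, ⟨z, hz, hcz⟩⟩ := Finset.mem_filter.1 hc
      have := S.min'_le y hy
      have := S.le_max' z hz
      exact ⟨c, hcS, by omega, by omega⟩
    have hVhVt : Disjoint (Vh.filter (fun e => ¬ NS e)) (Vt.filter (fun e => ¬ NS e)) := by
      rw [Finset.disjoint_left]
      intro x hx1 hx2
      obtain ⟨hxVh, hxNS⟩ := Finset.mem_filter.1 hx1
      obtain ⟨hxVt, _⟩ := Finset.mem_filter.1 hx2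
      apply hxNS
      rcases hVhmem x hxVh with ⟨hmB, hee⟩ | ⟨hMB, hee⟩ <;>
        rcases hVtmem x hxVt with ⟨hmA, hff⟩ | ⟨hMA, hff⟩
      · exact absurd ⟨hmA, hmB⟩ exclm
      · refine hNSmM x ?_ ?_
        · rw [hee]; exact (firedmB hmB).1
        · rw [hff]; exact (firedMA hMA).1
      · refine hNSmM x ?_ ?_
        · rw [hff]; exact (firedmA hmA).1
        · rw [hee]; exact (firedMB hMB).1
      · exact absurd ⟨hMA, hMB⟩ exclM
    have hWdisj1 : Disjoint W' (Vh.filter (fun e => ¬ NS e) ∪ Vt.filter (fun e => ¬ NS e)) := by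
      rw [Finset.disjoint_left]
      intro x hx1 hx2
      have hxNS : NS x := (Finset.mem_filter.1 hx1).2.2
      rcases Finset.mem_union.1 hx2 with h | h
      · exact (Finset.mem_filter.1 h).2 hxNS
      · exact (Finset.mem_filter.1 h).2 hxNS
    have hWsub : W' ∪ (Vh.filter (fun e => ¬ NS e) ∪ Vt.filter (fun e => ¬ NS e)) ⊆ Wr := by
      intro x hx
      rcases Finset.mem_union.1 hx with h | h
      · obtain ⟨hxE, hxt, _⟩ := Finset.mem_filter.1 h
        exact Finset.mem_filter.2 ⟨hxE, hxt⟩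
      · rcases Finset.mem_union.1 h with h | h
        · exact hVhsub (Finset.mem_filter.1 h).1
        · exact hVtsub (Finset.mem_filter.1 h).1
    have q10 : W'.card + (Vh.filter (fun e => ¬ NS e)).card
        + (Vt.filter (fun e => ¬ NS e)).card ≤ Wr.card := by
      have h1 := Finset.card_le_card hWsub
      rw [Finset.card_union_of_disjoint hWdisj1, Finset.card_union_of_disjoint hVhVt] at h1
      omega
    have ha0 := hcnt A
    have hb0 := hcnt B
    omega

end key

/-- Let `n ≥ 3` and `k ≥ 1`. A finite simple graph with `n` vertices admitting
a deque layout with `k` deques has at most `(2k+1)n - 5k - 1` edges. -/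
theorem deque_layout_density (n k : ℕ) (hn : 3 ≤ n) (hk : 1 ≤ k)
    (V : Type) [Fintype V] [DecidableEq V] (G : SimpleGraph V)
    [DecidableRel G.Adj] (hV : Fintype.card V = n)
    (h : HasDequeLayout G k) :
    (G.edgeFinset.card : ℤ) ≤ (2 * k + 1) * n - 5 * k - 1 := by
  classical
  obtain ⟨f, c, hc⟩ := h
  set S : Finset ℕ := Finset.univ.image f with hSdef
  have hScard : S.card = n := by
    rw [hSdef, Finset.card_image_of_injective _ f.injective, Finset.card_univ, hV]
  set P : Finset (V × V) :=
    Finset.univ.filter (fun p => G.Adj p.1 p.2 ∧ f p.1 < f p.2) with hPdef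
  set EP : Finset (ℕ × ℕ) := P.image (fun p => (f p.1, f p.2)) with hEPdef
  -- EP has the same cardinality as the edge set
  have hinj2 : Function.Injective (fun p : V × V => (f p.1, f p.2)) := by
    intro p q hpq
    have h1 : f p.1 = f q.1 := congrArg Prod.fst hpq
    have h2 : f p.2 = f q.2 := congrArg Prod.snd hpq
    exact Prod.ext (f.injective h1) (f.injective h2)
  have hEPcard : EP.card = G.edgeFinset.card := by
    rw [hEPdef, Finset.card_image_of_injective _ hinj2]
    apply Finset.card_bij (fun (p : V × V) _ => Sym2.mk p.1 p.2)
    · intro p hp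
      obtain ⟨-, hadj, -⟩ := Finset.mem_filter.1 hp
      exact SimpleGraph.mem_edgeFinset.2 hadj
    · intro p hp q hq hpq
      obtain ⟨-, hadjp, hltp⟩ := Finset.mem_filter.1 hp
      obtain ⟨-, hadjq, hltq⟩ := Finset.mem_filter.1 hq
      rcases Sym2.eq_iff.1 hpq with ⟨h1, h2⟩ | ⟨h1, h2⟩
      · exact Prod.ext h1 h2
      · exfalso
        rw [h1, h2] at hltp
        omega
    · intro e he
      induction e using Sym2.ind with
      | _ u v =>
        have hadj : G.Adj u v := SimpleGraph.mem_edgeFinset.1 he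
        have hne : f u ≠ f v := fun hh => G.ne_of_adj hadj (f.injective hh)
        rcases lt_or_gt_of_ne hne with hlt | hlt
        · exact ⟨(u, v), Finset.mem_filter.2 ⟨Finset.mem_univ _, hadj, hlt⟩, rfl⟩
        · refine ⟨(v, u), Finset.mem_filter.2 ⟨Finset.mem_univ _, hadj.symm, hlt⟩, ?_⟩
          exact Sym2.eq_swap
  -- EP as a set is the set of ordered edges
  have hEPset : (↑EP : Set (ℕ × ℕ)) = orderedEdges G f := by
    ext x
    rw [Finset.mem_coe, hEPdef]
    constructor
    · intro hx
      obtain ⟨p, hp, rfl⟩ := Finset.mem_image.1 hx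
      obtain ⟨-, hadj, hlt⟩ := Finset.mem_filter.1 hp
      exact ⟨p.1, p.2, hadj, rfl, rfl, hlt⟩
    · rintro ⟨u, v, hadj, h1, h2, hlt⟩
      apply Finset.mem_image.2
      refine ⟨(u, v), Finset.mem_filter.2 ⟨Finset.mem_univ _, hadj, ?_⟩, ?_⟩
      · rw [h1, h2]; exact hlt
      · exact Prod.ext h1 h2
  have hEmem : ∀ e ∈ EP, e.1 ∈ S ∧ e.2 ∈ S ∧ e.1 < e.2 := by
    intro e he
    rw [hEPdef] at he
    obtain ⟨p, hp, rfl⟩ := Finset.mem_image.1 he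
    obtain ⟨-, -, hlt⟩ := Finset.mem_filter.1 hp
    refine ⟨?_, ?_, hlt⟩
    · exact Finset.mem_image.2 ⟨p.1, Finset.mem_univ _, rfl⟩
    · exact Finset.mem_image.2 ⟨p.2, Finset.mem_univ _, rfl⟩
  -- per-class bound from `key`
  have hclass : ∀ i : Fin k,
      ((EP.filter (fun p => c p = i)).filter
        (fun e => ∃ x ∈ S, e.1 < x ∧ x < e.2)).card ≤ 2 * n - 5 := by
    intro i
    have hdq : IsDeque (↑(EP.filter (fun p => c p = i)) : Set (ℕ × ℕ)) := by
      have : (↑(EP.filter (fun p => c p = i)) : Set (ℕ × ℕ)) =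
          {p | p ∈ orderedEdges G f ∧ c p = i} := by
        rw [Finset.coe_filter]
        rw [← hEPset]
        rfl
      rw [this]
      exact hc i
    have := key S (by omega) (EP.filter (fun p => c p = i))
      (fun e he => hEmem e (Finset.mem_filter.1 he).1) hdq
    omega
  -- spine bound
  set SP := EP.filter (fun e => ¬ ∃ x ∈ S, e.1 < x ∧ x < e.2) with hSPdef
  have hSne : S.Nonempty := Finset.card_pos.1 (by omega)
  have hSPcard : SP.card ≤ n - 1 := by
    have h1 : SP.card ≤ (S.erase (S.max' hSne)).card := by
      apply Finset.card_le_card_of_injOn (fun e => e.1)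
      · intro e he
        obtain ⟨heEP, -⟩ := Finset.mem_filter.1 he
        obtain ⟨h1, h2, h3⟩ := hEmem e heEP
        refine Finset.mem_erase.2 ⟨?_, h1⟩
        have := S.le_max' e.2 h2
        beta_reduce
        omega
      · intro e he e' he' heq
        simp only at heq
        obtain ⟨heEP, hsp⟩ := Finset.mem_filter.1 he
        obtain ⟨heEP', hsp'⟩ := Finset.mem_filter.1 he'
        obtain ⟨g1, g2, g3⟩ := hEmem e heEP
        obtain ⟨g1', g2', g3'⟩ := hEmem e' heEP'
        rcases lt_trichotomy e.2 e'.2 with hlt | hlt | hlt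
        · exfalso; exact hsp' ⟨e.2, g2, by omega, hlt⟩
        · exact Prod.ext heq hlt
        · exfalso; exact hsp ⟨e'.2, g2', by omega, hlt⟩
    have h2 : (S.erase (S.max' hSne)).card = n - 1 := by
      rw [Finset.card_erase_of_mem (S.max'_mem hSne), hScard]
    omega
  -- assembling the count
  set NSP := EP.filter (fun e => ∃ x ∈ S, e.1 < x ∧ x < e.2) with hNSPdef
  have hsplitEP : NSP.card + SP.card = EP.card :=
    Finset.card_filter_add_card_filter_not _
  have hfiber : NSP.card = ∑ i : Fin k, (NSP.filter (fun p => c p = i)).card :=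
    Finset.card_eq_sum_card_fiberwise (fun x _ => Finset.mem_univ (c x))
  have hflip : ∀ i : Fin k, (NSP.filter (fun p => c p = i)).card =
      ((EP.filter (fun p => c p = i)).filter (fun e => ∃ x ∈ S, e.1 < x ∧ x < e.2)).card := by
    intro i
    rw [hNSPdef, Finset.filter_comm]
  have hsum : NSP.card ≤ k * (2 * n - 5) := by
    rw [hfiber]
    calc ∑ i : Fin k, (NSP.filter (fun p => c p = i)).card
        ≤ ∑ _i : Fin k, (2 * n - 5) := by
          apply Finset.sum_le_sum
          intro i _
          rw [hflip i]
          exact hclass i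
      _ = k * (2 * n - 5) := by
          rw [Finset.sum_const, Finset.card_univ, Fintype.card_fin, smul_eq_mul]
  have hfinal : G.edgeFinset.card ≤ (n - 1) + k * (2 * n - 5) := by omega
  have hcast : (G.edgeFinset.card : ℤ) ≤ ((n - 1 : ℕ) : ℤ) + (k : ℤ) * ((2 * n - 5 : ℕ) : ℤ) := by
    have := (Nat.cast_le (α := ℤ)).2 hfinal
    push_cast at this ⊢
    linarith
  have h5 : ((2 * n - 5 : ℕ) : ℤ) = 2 * (n : ℤ) - 5 := by
    have : 5 ≤ 2 * n := by omega
    omega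
  have h6 : ((n - 1 : ℕ) : ℤ) = (n : ℤ) - 1 := by omega
  rw [h5, h6] at hcast
  have hkk : (1 : ℤ) ≤ (k : ℤ) := by exact_mod_cast hk
  nlinarith [hcast, hkk]

end DequePaper
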